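/- Let p ∈ [0, 1/2). There exists a constant C > 0 such that for all h ∈ (0, 1), Σ_{m≥1} λ_m^{-p} (1 - e^{-2 λ_m h})/(2 λ_m) ≤ C h^{p + 1/2}. -/

import Mathlib

open Real Finset

noncomputable def lam (m : ℕ) : ℝ := (Real.pi * m) ^ 2 / 2

private lemma lam_pos' (m : ℕ) : 0 < lam (m + 1) := by
  unfold lam
  have h := Real.pi_pos
  have : (0:ℝ) < ((m:ℝ)+1) := by positivity
  push_cast
  positivity

private lemma lam_ge' (m : ℕ) : ((m:ℝ)+1)^2 ≤ lam (m + 1) := by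
  unfold lam
  have h := Real.pi_gt_three
  have h9 : (9:ℝ) ≤ Real.pi^2 := by nlinarith
  push_cast
  nlinarith [sq_nonneg ((m:ℝ)+1)]

private lemma lam_rpow_le' (m : ℕ) {q : ℝ} (hq : 0 ≤ q) :
    lam (m + 1) ^ (-q) ≤ ((m:ℝ)+1) ^ (-(2*q)) := by
  have h1 : (0:ℝ) < ((m:ℝ)+1)^2 := by positivity
  have h2 : lam (m+1) ^ (-q) ≤ (((m:ℝ)+1)^2) ^ (-q) :=
    Real.rpow_le_rpow_of_nonpos h1 (lam_ge' m) (by linarith)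
  refine h2.trans_eq ?_
  rw [← Real.rpow_natCast ((m:ℝ)+1) 2, ← Real.rpow_mul (by positivity)]
  norm_num

private lemma step_bound' {a : ℝ} (ha : 0 < a) (ha1 : a ≤ 1) (i : ℕ) :
    a * ((i:ℝ)+1) ^ (a-1) ≤ ((i:ℝ)+1) ^ a - (i:ℝ) ^ a := by
  rcases Nat.eq_zero_or_pos i with rfl | hi
  · norm_num [Real.zero_rpow ha.ne', ha1]
  · have hi1 : (1:ℝ) ≤ (i:ℝ) := by exact_mod_cast hi
    have hlt : (i:ℝ) < (i:ℝ) + 1 := by linarith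
    obtain ⟨c, hc, hceq⟩ := exists_hasDerivAt_eq_slope (fun x => x ^ a)
      (fun x => a * x ^ (a-1)) hlt
      (fun x hx => (Real.continuousAt_rpow_const x a
        (Or.inl (show x ≠ 0 by have h1 := hx.1; intro h0; rw [h0] at h1; linarith))).continuousWithinAt)
      (fun x hx => Real.hasDerivAt_rpow_const (p := a)
        (Or.inl (show x ≠ 0 by have h1 := hx.1; intro h0; rw [h0] at h1; linarith)))
    have hc1 : (0:ℝ) < c := lt_of_le_of_lt (by linarith) hc.1
    have hmono : a * ((i:ℝ)+1) ^ (a-1) ≤ a * c ^ (a-1) := by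
      have := Real.rpow_le_rpow_of_nonpos hc1 hc.2.le (by linarith : a - 1 ≤ 0)
      nlinarith
    calc a * ((i:ℝ)+1) ^ (a-1) ≤ a * c ^ (a-1) := hmono
    _ = ((i:ℝ)+1) ^ a - (i:ℝ) ^ a := by rw [hceq]; field_simp; ring

private lemma sum_pow_le' {a : ℝ} (ha : 0 < a) (ha1 : a ≤ 1) (N : ℕ) :
    ∑ i ∈ range N, ((i:ℝ)+1) ^ (a-1) ≤ (N:ℝ) ^ a / a := by
  have key : ∀ i : ℕ, ((i:ℝ)+1) ^ (a-1) ≤ (((i:ℝ)+1) ^ a - (i:ℝ) ^ a) / a := by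
    intro i
    rw [le_div_iff₀ ha]
    linarith [step_bound' ha ha1 i]
  calc ∑ i ∈ range N, ((i:ℝ)+1) ^ (a-1)
      ≤ ∑ i ∈ range N, ((((i:ℝ)+1) ^ a - (i:ℝ) ^ a) / a) := Finset.sum_le_sum fun i _ => key i
    _ = (∑ i ∈ range N, ((((i:ℝ)+1) ^ a - (i:ℝ) ^ a))) / a := by rw [Finset.sum_div]
    _ = (∑ i ∈ range N, ((((i+1:ℕ):ℝ)) ^ a - ((i:ℕ):ℝ) ^ a)) / a := by
        congr 1
        apply Finset.sum_congr rfl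
        intro i _
        push_cast
        ring
    _ = ((N:ℝ) ^ a - ((0:ℕ):ℝ) ^ a) / a := by
        rw [Finset.sum_range_sub (f := fun i => ((i:ℕ):ℝ) ^ a)]
    _ ≤ (N:ℝ) ^ a / a := by norm_num [Real.zero_rpow ha.ne']

/-- Bound on `Σ_m λ_m^{-p} (1-e^{-2λ_m h})/(2λ_m)` (term `δ_1`). -/
theorem stmt_9 (p : ℝ) (hp0 : 0 ≤ p) (hp : p < 1 / 2) :
    ∃ C : ℝ, 0 < C ∧ ∀ h : ℝ, 0 < h → h < 1 →
      ∑' m : ℕ, lam (m + 1) ^ (-p) * (1 - Real.exp (-2 * lam (m + 1) * h)) / (2 * lam (m + 1)) ≤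
        C * h ^ (p + 1 / 2) := by
  set a : ℝ := 1 - 2*p with ha_def
  have ha : 0 < a := by simp only [ha_def]; linarith
  have ha1 : a ≤ 1 := by simp only [ha_def]; linarith
  refine ⟨2/a + 1, by positivity, ?_⟩
  intro h hh0 hh1
  set f : ℕ → ℝ := fun m => lam (m + 1) ^ (-p) * (1 - Real.exp (-2 * lam (m + 1) * h)) / (2 * lam (m + 1)) with hf_def
  have hfnonneg : ∀ m, 0 ≤ f m := by
    intro m
    have hl := lam_pos' m
    have he : Real.exp (-2 * lam (m+1) * h) ≤ 1 := by
      rw [Real.exp_le_one_iff]; nlinarith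
    apply div_nonneg (mul_nonneg (Real.rpow_nonneg hl.le _) (by linarith)) (by linarith)
  -- bound A: f m ≤ (m+1)^(a-1) * h
  have hA : ∀ m, f m ≤ ((m:ℝ)+1) ^ (a-1) * h := by
    intro m
    have hl := lam_pos' m
    have hu : 1 - Real.exp (-2 * lam (m+1) * h) ≤ 2 * lam (m+1) * h := by
      have := Real.add_one_le_exp (-(2 * lam (m+1) * h))
      have heq : -2 * lam (m+1) * h = -(2 * lam (m+1) * h) := by ring
      rw [heq]; linarith
    have e1 : f m ≤ lam (m+1) ^ (-p) * (2 * lam (m+1) * h) / (2 * lam (m+1)) := by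
      simp only [hf_def]
      gcongr
    have e2 : lam (m+1) ^ (-p) * (2 * lam (m+1) * h) / (2 * lam (m+1)) = lam (m+1) ^ (-p) * h := by
      field_simp
    have e3 : lam (m+1) ^ (-p) ≤ ((m:ℝ)+1) ^ (a-1) := by
      have := lam_rpow_le' m hp0
      rwa [show -(2*p) = a - 1 by simp only [ha_def]; ring] at this
    calc f m ≤ lam (m+1) ^ (-p) * (2 * lam (m+1) * h) / (2 * lam (m+1)) := e1
      _ = lam (m+1) ^ (-p) * h := e2
      _ ≤ ((m:ℝ)+1) ^ (a-1) * h := mul_le_mul_of_nonneg_right e3 hh0.le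
  -- bound B: f m ≤ (m+1)^(-(2p)) * (m+1)^(-2)
  have hB : ∀ m, f m ≤ ((m:ℝ)+1) ^ (-(2*p)) * ((m:ℝ)+1) ^ (-(2:ℝ)) := by
    intro m
    have hl := lam_pos' m
    have e1 : f m ≤ lam (m+1) ^ (-p) * 1 / (2 * lam (m+1)) := by
      simp only [hf_def]
      gcongr
      linarith [Real.exp_pos (-2 * lam (m+1) * h)]
    have e2 : lam (m+1) ^ (-p) * 1 / (2 * lam (m+1)) ≤ lam (m+1) ^ (-p) * lam (m+1) ^ (-(1:ℝ)) := by
      rw [Real.rpow_neg_one, mul_one, div_eq_mul_inv]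
      gcongr
      linarith
    have e3 : lam (m+1) ^ (-p) * lam (m+1) ^ (-(1:ℝ)) ≤ ((m:ℝ)+1) ^ (-(2*p)) * ((m:ℝ)+1) ^ (-(2:ℝ)) := by
      have b1 := lam_rpow_le' m hp0
      have b2 := lam_rpow_le' m (zero_le_one : (0:ℝ) ≤ 1)
      rw [show -(2*(1:ℝ)) = -(2:ℝ) by norm_num] at b2
      exact mul_le_mul b1 b2 (Real.rpow_nonneg hl.le _) (Real.rpow_nonneg (by positivity) _)
    exact (e1.trans e2).trans e3
  -- summability
  have hsum2 : Summable (fun m : ℕ => ((m:ℝ)+1) ^ (-(2:ℝ))) := by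
    have h1 : Summable (fun n : ℕ => (n:ℝ) ^ (-(2:ℝ))) :=
      Real.summable_nat_rpow.mpr (by norm_num)
    have h2 := (summable_nat_add_iff 1).mpr h1
    exact h2.congr (fun n => by push_cast; ring_nf)
  have hsum : Summable f := by
    apply Summable.of_nonneg_of_le hfnonneg (fun m => ?_) hsum2
    have := hB m
    have hle1 : ((m:ℝ)+1) ^ (-(2*p)) ≤ 1 :=
      Real.rpow_le_one_of_one_le_of_nonpos (by push_cast; linarith [Nat.cast_nonneg (α := ℝ) m]) (by linarith)
    nlinarith [Real.rpow_nonneg (show (0:ℝ) ≤ (m:ℝ)+1 by positivity) (-(2:ℝ))]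
  -- the cutoff
  set s : ℝ := h ^ (-(1/2) : ℝ) with hs_def
  have hs0 : 0 < s := Real.rpow_pos_of_pos hh0 _
  have hs1 : 1 ≤ s := Real.one_le_rpow_of_pos_of_le_one_of_nonpos hh0 hh1.le (by norm_num)
  set N : ℕ := ⌈s⌉₊ with hN_def
  have hsN : s ≤ (N:ℝ) := Nat.le_ceil s
  have hN2 : (N:ℝ) ≤ 2*s := le_trans (Nat.ceil_lt_add_one hs0.le).le (by linarith)
  have hNpos : (0:ℝ) < (N:ℝ) := lt_of_lt_of_le hs0 hsN
  -- split the sum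
  have hsplit := Summable.sum_add_tsum_nat_add (f := f) N hsum
  rw [← hsplit]
  -- head bound
  have hhead : ∑ i ∈ range N, f i ≤ (2/a) * h ^ (p + 1/2) := by
    have c1 : ∑ i ∈ range N, f i ≤ (∑ i ∈ range N, ((i:ℝ)+1) ^ (a-1)) * h := by
      rw [Finset.sum_mul]
      exact Finset.sum_le_sum fun i _ => hA i
    have c2 : (∑ i ∈ range N, ((i:ℝ)+1) ^ (a-1)) * h ≤ ((N:ℝ) ^ a / a) * h :=
      mul_le_mul_of_nonneg_right (sum_pow_le' ha ha1 N) hh0.le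
    have c3 : (N:ℝ) ^ a ≤ 2 * h ^ (p - 1/2) := by
      calc (N:ℝ) ^ a ≤ (2*s) ^ a := Real.rpow_le_rpow hNpos.le hN2 ha.le
        _ = 2 ^ a * s ^ a := Real.mul_rpow (by norm_num) hs0.le
        _ ≤ 2 * h ^ (p - 1/2) := by
            have d1 : (2:ℝ) ^ a ≤ 2 := by
              calc (2:ℝ) ^ a ≤ (2:ℝ) ^ (1:ℝ) := Real.rpow_le_rpow_of_exponent_le one_le_two ha1
                _ = 2 := Real.rpow_one 2
            have d2 : s ^ a = h ^ (p - 1/2) := by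
              rw [hs_def, ← Real.rpow_mul hh0.le]
              congr 1
              simp only [ha_def]; ring
            rw [d2]
            exact mul_le_mul_of_nonneg_right d1 (Real.rpow_nonneg hh0.le _)
    have c4 : ((N:ℝ) ^ a / a) * h ≤ ((2 * h ^ (p - 1/2)) / a) * h := by
      gcongr
    have c5 : ((2 * h ^ (p - 1/2)) / a) * h = (2/a) * h ^ (p + 1/2) := by
      have : h ^ (p + 1/2) = h ^ (1:ℝ) * h ^ (p - 1/2) := by
        rw [← Real.rpow_add hh0]; congr 1; ring
      rw [this, Real.rpow_one]; ring
    calc ∑ i ∈ range N, f i ≤ (∑ i ∈ range N, ((i:ℝ)+1) ^ (a-1)) * h := c1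
      _ ≤ ((N:ℝ) ^ a / a) * h := c2
      _ ≤ ((2 * h ^ (p - 1/2)) / a) * h := c4
      _ = (2/a) * h ^ (p + 1/2) := c5
  -- tail bound
  have htail : ∑' i : ℕ, f (i + N) ≤ h ^ (p + 1/2) := by
    have t0 : (N:ℝ) ^ (-(2*p+1)) ≤ h ^ (p + 1/2) := by
      calc (N:ℝ) ^ (-(2*p+1)) ≤ s ^ (-(2*p+1)) :=
            Real.rpow_le_rpow_of_nonpos hs0 hsN (by linarith)
        _ = h ^ (p + 1/2) := by
            rw [hs_def, ← Real.rpow_mul hh0.le]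
            congr 1; ring
    refine le_trans (Real.tsum_le_of_sum_range_le (fun i => hfnonneg _) (fun n => ?_)) t0
    set g : ℕ → ℝ := fun j => ((j:ℝ) + (N:ℝ))⁻¹ with hg_def
    have hterm : ∀ i : ℕ, f (i + N) ≤ (N:ℝ) ^ (-(2*p)) * (g i - g (i+1)) := by
      intro i
      set x : ℝ := (i:ℝ) + (N:ℝ) with hx_def
      have hx1 : (1:ℝ) ≤ x := by
        have : (1:ℝ) ≤ (N:ℝ) := by exact_mod_cast Nat.ceil_pos.mpr hs0
        simp only [hx_def]
        have : (0:ℝ) ≤ (i:ℝ) := Nat.cast_nonneg i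
        linarith [show (1:ℝ) ≤ (N:ℝ) from by exact_mod_cast Nat.ceil_pos.mpr hs0]
      have hBc : f (i + N) ≤ (x+1) ^ (-(2*p)) * (x+1) ^ (-(2:ℝ)) := by
        have := hB (i + N)
        have hcast : ((i+N:ℕ):ℝ) + 1 = x + 1 := by push_cast; simp only [hx_def]
        rwa [hcast] at this
      have u1 : (x+1) ^ (-(2*p)) ≤ (N:ℝ) ^ (-(2*p)) :=
        Real.rpow_le_rpow_of_nonpos hNpos (by simp only [hx_def]; linarith [Nat.cast_nonneg (α := ℝ) i]) (by linarith)
      have u2 : (x+1) ^ (-(2:ℝ)) ≤ g i - g (i+1) := by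
        have hgeq : g i - g (i+1) = (x * (x+1))⁻¹ := by
          simp only [hg_def, hx_def]
          push_cast
          have hz1 : (i:ℝ) + (N:ℝ) ≠ 0 := by positivity
          have hz2 : (i:ℝ) + 1 + (N:ℝ) ≠ 0 := by positivity
          have hz3 : (i:ℝ) + (N:ℝ) + 1 ≠ 0 := by positivity
          field_simp
          ring_nf
        have hpow : (x+1) ^ (-(2:ℝ)) = ((x+1)^2)⁻¹ := by
          rw [Real.rpow_neg (by linarith), ← Real.rpow_natCast (x+1) 2]
          norm_num
        rw [hgeq, hpow]
        apply inv_anti₀ (by nlinarith)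
        nlinarith
      calc f (i + N) ≤ (x+1) ^ (-(2*p)) * (x+1) ^ (-(2:ℝ)) := hBc
        _ ≤ (N:ℝ) ^ (-(2*p)) * (g i - g (i+1)) := by
            apply mul_le_mul u1 u2 (Real.rpow_nonneg (by linarith) _) (Real.rpow_nonneg hNpos.le _)
    calc ∑ i ∈ range n, f (i + N) ≤ ∑ i ∈ range n, (N:ℝ) ^ (-(2*p)) * (g i - g (i+1)) :=
          Finset.sum_le_sum fun i _ => hterm i
      _ = (N:ℝ) ^ (-(2*p)) * ∑ i ∈ range n, (g i - g (i+1)) := by rw [Finset.mul_sum]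
      _ = (N:ℝ) ^ (-(2*p)) * (g 0 - g n) := by rw [Finset.sum_range_sub' g]
      _ ≤ (N:ℝ) ^ (-(2*p)) * (N:ℝ)⁻¹ := by
          apply mul_le_mul_of_nonneg_left ?_ (Real.rpow_nonneg hNpos.le _)
          have : 0 ≤ g n := by
            simp only [hg_def]
            positivity
          have : g 0 = (N:ℝ)⁻¹ := by simp [hg_def]
          linarith [show (0:ℝ) ≤ g n from by simp only [hg_def]; positivity]
      _ = (N:ℝ) ^ (-(2*p+1)) := by
          rw [← Real.rpow_neg_one (N:ℝ), ← Real.rpow_add hNpos]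
          congr 1; ring
  linarith [hhead, htail]
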